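/- Let ψ : U → ℝⁿ be a C^∞ map on an open set U ⊆ ℝᵐ with Dψ(u) injective for every u, define G : ℝⁿ × U → ℝᵐ by G(a, u) := Dψ(u)ᵀ(a − ψ(u)), and let (a₀, u₀) satisfy G(a₀, u₀) = 0. Write H for the Hessian at u₀ of d_{a₀}(u) := ½‖a₀ − ψ(u)‖². Then DG(a₀,u₀)(ȧ, u̇) = Dψ(u₀)ᵀȧ − H u̇ for all (ȧ, u̇) ∈ ℝⁿ × ℝᵐ, so ker DG(a₀,u₀) = {(ȧ, u̇) : Dψ(u₀)ᵀȧ = H u̇}; and the linear map ker DG(a₀,u₀) → ℝⁿ, (ȧ, u̇) ↦ ȧ, is bijective if and only if H is invertible. -/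

import Mathlib

open scoped RealInnerProductSpace

noncomputable section

noncomputable def adjCLM (E F : Type*) [NormedAddCommGroup E] [InnerProductSpace ℝ E]
    [NormedAddCommGroup F] [InnerProductSpace ℝ F] [CompleteSpace E] [CompleteSpace F] :
    (E →L[ℝ] F) →L[ℝ] (F →L[ℝ] E) :=
  LinearMap.mkContinuous
    { toFun := fun T => ContinuousLinearMap.adjoint T
      map_add' := fun T S => map_add _ _ _
      map_smul' := fun c T => by
        simp [LinearIsometryEquiv.map_smulₛₗ, starRingEnd_apply] }
    1 (fun T => by simp [LinearIsometryEquiv.norm_map])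

@[simp] theorem adjCLM_apply {E F : Type*} [NormedAddCommGroup E] [InnerProductSpace ℝ E]
    [NormedAddCommGroup F] [InnerProductSpace ℝ F] [CompleteSpace E] [CompleteSpace F]
    (T : E →L[ℝ] F) : adjCLM E F T = ContinuousLinearMap.adjoint T := rfl

set_option maxHeartbeats 1600000 in

/-- Chart formulation of Lemma A.2 (lem_character_1-S): the derivative of the defining map of
the critical point locus, its kernel, and well-posedness iff the Hessian is invertible. -/
theorem stmt_10 {m n : ℕ}
    (U : Set (EuclideanSpace ℝ (Fin m))) (hU : IsOpen U)
    (ψ : EuclideanSpace ℝ (Fin m) → EuclideanSpace ℝ (Fin n))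
    (hψ : ContDiffOn ℝ (⊤ : ℕ∞) ψ U)
    (hinj : ∀ u ∈ U, Function.Injective (fderiv ℝ ψ u))
    (G : EuclideanSpace ℝ (Fin n) × EuclideanSpace ℝ (Fin m) → EuclideanSpace ℝ (Fin m))
    (hG : ∀ a u, G (a, u) = ContinuousLinearMap.adjoint (fderiv ℝ ψ u) (a - ψ u))
    (a₀ : EuclideanSpace ℝ (Fin n))
    (u₀ : EuclideanSpace ℝ (Fin m)) (hu₀ : u₀ ∈ U)
    (hG₀ : G (a₀, u₀) = 0)
    (H : EuclideanSpace ℝ (Fin m) →L[ℝ] EuclideanSpace ℝ (Fin m))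
    (hH : ∀ v w, ⟪H v, w⟫ =
      fderiv ℝ (fderiv ℝ (fun u => (1 / 2 : ℝ) * ‖a₀ - ψ u‖ ^ 2)) u₀ v w) :
    (∀ (da : EuclideanSpace ℝ (Fin n)) (du : EuclideanSpace ℝ (Fin m)),
      fderiv ℝ G (a₀, u₀) (da, du) =
        ContinuousLinearMap.adjoint (fderiv ℝ ψ u₀) da - H du) ∧
    ((LinearMap.ker (fderiv ℝ G (a₀, u₀) :
          EuclideanSpace ℝ (Fin n) × EuclideanSpace ℝ (Fin m) →ₗ[ℝ] EuclideanSpace ℝ (Fin m)) :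
        Set (EuclideanSpace ℝ (Fin n) × EuclideanSpace ℝ (Fin m))) =
      {p | ContinuousLinearMap.adjoint (fderiv ℝ ψ u₀) p.1 = H p.2}) ∧
    (Function.Bijective (fun q : LinearMap.ker (fderiv ℝ G (a₀, u₀) :
          EuclideanSpace ℝ (Fin n) × EuclideanSpace ℝ (Fin m) →ₗ[ℝ] EuclideanSpace ℝ (Fin m)) =>
        ((q : EuclideanSpace ℝ (Fin n) × EuclideanSpace ℝ (Fin m))).1) ↔
      Function.Bijective H) := by
  let E := EuclideanSpace ℝ (Fin m)
  let F := EuclideanSpace ℝ (Fin n)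
  set A : E → (F →L[ℝ] E) := fun u => adjCLM E F (fderiv ℝ ψ u) with hA
  set f : E → E := fun u => A u (a₀ - ψ u) with hf
  set d : E → ℝ := fun u => (1 / 2 : ℝ) * ‖a₀ - ψ u‖ ^ 2 with hd
  -- differentiability facts
  have hψat : ∀ u ∈ U, ContDiffAt ℝ (⊤ : ℕ∞) ψ u := fun u hu =>
    hψ.contDiffAt (hU.mem_nhds hu)
  have hψd : ∀ u ∈ U, DifferentiableAt ℝ ψ u := fun u hu =>
    (hψat u hu).differentiableAt (by simp)
  have hDdiff : DifferentiableAt ℝ (fun u => fderiv ℝ ψ u) u₀ :=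
    ((hψat u₀ hu₀).fderiv_right (m := (⊤ : ℕ∞)) (by norm_cast)).differentiableAt (by simp)
  have hAdiff : DifferentiableAt ℝ A u₀ := by
    rw [hA]
    exact ((adjCLM E F).differentiable.differentiableAt).comp u₀ hDdiff
  have hfdiff : DifferentiableAt ℝ f u₀ :=
    hAdiff.clm_apply ((differentiableAt_const a₀).sub (hψd u₀ hu₀))
  -- first derivative of d on U
  have hd1 : ∀ u ∈ U, HasFDerivAt d (-(innerSL ℝ (f u))) u := by
    intro u hu
    have h1 : HasFDerivAt (fun u => a₀ - ψ u) (-(fderiv ℝ ψ u)) u :=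
      ((hψd u hu).hasFDerivAt).const_sub a₀
    have h2 := (h1.inner ℝ h1).const_mul (1 / 2 : ℝ)
    have hde : d = fun u => (1 / 2 : ℝ) * ⟪a₀ - ψ u, a₀ - ψ u⟫ := by
      funext u; rw [hd]; rw [real_inner_self_eq_norm_sq]
    rw [hde]
    refine HasFDerivAt.congr_fderiv h2 (Eq.symm ?_)
    ext v
    simp only [ContinuousLinearMap.coe_smul', Pi.smul_apply, ContinuousLinearMap.coe_comp',
      Function.comp_apply, ContinuousLinearMap.neg_apply, ContinuousLinearMap.prod_apply,
      fderivInnerCLM_apply, innerSL_apply_apply, smul_eq_mul, hf, hA, adjCLM_apply]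
    rw [ContinuousLinearMap.adjoint_inner_left]
    simp only [inner_neg_right, inner_neg_left, ContinuousLinearMap.neg_apply]
    rw [real_inner_comm ((fderiv ℝ ψ u) v) (a₀ - ψ u)]
    ring
  -- second derivative of d at u₀
  have hev : fderiv ℝ d =ᶠ[nhds u₀] fun u => -(innerSL ℝ (f u)) :=
    Filter.eventually_of_mem (hU.mem_nhds hu₀) (fun u hu => (hd1 u hu).fderiv)
  have hd2 : fderiv ℝ (fderiv ℝ d) u₀ = -((innerSL ℝ (E := E)).comp (fderiv ℝ f u₀)) := by
    rw [hev.fderiv_eq]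
    have : HasFDerivAt (fun u => -(innerSL ℝ (f u)))
        (-((innerSL ℝ (E := E)).comp (fderiv ℝ f u₀))) u₀ :=
      (((innerSL ℝ (E := E)).hasFDerivAt).comp u₀ hfdiff.hasFDerivAt).neg
    exact this.fderiv
  -- f's derivative is -H
  have hfH : fderiv ℝ f u₀ = -H := by
    refine ContinuousLinearMap.ext fun v => ?_
    apply ext_inner_right ℝ
    intro w
    have h := hH v w
    rw [hd2] at h
    simp only [ContinuousLinearMap.neg_apply, ContinuousLinearMap.coe_comp',
      Function.comp_apply, innerSL_apply_apply] at h
    have h2 : ⟪fderiv ℝ f u₀ v, w⟫ = -⟪H v, w⟫ := by rw [h]; ring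
    rw [h2, ContinuousLinearMap.neg_apply, inner_neg_left]
  -- derivative of G
  have hGeq : G = fun p => f p.2 + (A p.2) (p.1 - a₀) := by
    funext p
    have := hG p.1 p.2
    rw [show (p.1, p.2) = p from rfl] at this
    rw [this, hf]
    simp only [adjCLM_apply, hA]
    rw [← map_add]
    congr 1
    abel
  set L : F × E →L[ℝ] E :=
    ((-H).comp (ContinuousLinearMap.snd ℝ F E)) +
      ((A u₀).comp (ContinuousLinearMap.fst ℝ F E)) with hL
  have hGhas : HasFDerivAt G L (a₀, u₀) := by
    rw [hGeq, hL]
    have p1 : HasFDerivAt (fun p : F × E => f p.2)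
        ((-H).comp (ContinuousLinearMap.snd ℝ F E)) (a₀, u₀) := by
      have := (hfH ▸ hfdiff.hasFDerivAt).comp (a₀, u₀)
        (hasFDerivAt_snd (𝕜 := ℝ) (p := (a₀, u₀)))
      exact this
    have hc : HasFDerivAt (fun p : F × E => A p.2)
        ((fderiv ℝ A u₀).comp (ContinuousLinearMap.snd ℝ F E)) (a₀, u₀) :=
      by have := (hAdiff.hasFDerivAt).comp (a₀, u₀) (hasFDerivAt_snd (𝕜 := ℝ) (p := (a₀, u₀))); exact this
    have hu : HasFDerivAt (fun p : F × E => p.1 - a₀)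
        (ContinuousLinearMap.fst ℝ F E) (a₀, u₀) := by
      simpa using (hasFDerivAt_fst (p := (a₀, u₀))).sub_const a₀
    have p2' := hc.clm_apply hu
    have p2 : HasFDerivAt (fun p : F × E => (A p.2) (p.1 - a₀))
        ((A u₀).comp (ContinuousLinearMap.fst ℝ F E)) (a₀, u₀) := by
      refine HasFDerivAt.congr_fderiv p2' (Eq.symm ?_)
      refine ContinuousLinearMap.ext fun q => ?_
      simp
    exact p1.add p2
  have hfderivG : fderiv ℝ G (a₀, u₀) = L := hGhas.fderiv
  have part1 : ∀ (da : F) (du : E),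
      fderiv ℝ G (a₀, u₀) (da, du) =
        ContinuousLinearMap.adjoint (fderiv ℝ ψ u₀) da - H du := by
    intro da du
    rw [hfderivG, hL]
    simp only [ContinuousLinearMap.add_apply, ContinuousLinearMap.coe_comp',
      Function.comp_apply, ContinuousLinearMap.coe_fst', ContinuousLinearMap.coe_snd',
      ContinuousLinearMap.neg_apply, hA, adjCLM_apply]
    abel
  have hker : ∀ p : F × E, p ∈ LinearMap.ker (fderiv ℝ G (a₀, u₀) : F × E →ₗ[ℝ] E) ↔
      ContinuousLinearMap.adjoint (fderiv ℝ ψ u₀) p.1 = H p.2 := by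
    intro p
    rw [LinearMap.mem_ker]
    have : fderiv ℝ G (a₀, u₀) p = ContinuousLinearMap.adjoint (fderiv ℝ ψ u₀) p.1 - H p.2 := by
      have := part1 p.1 p.2
      rwa [show (p.1, p.2) = p from rfl] at this
    rw [ContinuousLinearMap.coe_coe, this, sub_eq_zero]
  refine ⟨part1, ?_, ?_⟩
  · ext p
    exact hker p
  · constructor
    · intro hbij
      have hHinj : Function.Injective H := by
        intro x y hxy
        have hx : ((0 : F), x - y) ∈ LinearMap.ker (fderiv ℝ G (a₀, u₀) : F × E →ₗ[ℝ] E) := by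
          rw [hker]; simp [map_sub, hxy]
        have h0 : ((0 : F), (0 : E)) ∈ LinearMap.ker (fderiv ℝ G (a₀, u₀) : F × E →ₗ[ℝ] E) := by
          rw [hker]; simp
        have heq := hbij.injective (a₁ := ⟨(0, x - y), hx⟩) (a₂ := ⟨(0, 0), h0⟩) rfl
        have h2 := Subtype.ext_iff.mp heq
        have h3 := (Prod.ext_iff.mp h2).2
        exact sub_eq_zero.mp h3 ▸ (sub_eq_zero.mp (by simpa [sub_eq_zero] using h3) ▸ rfl)
      constructor
      · exact hHinj
      · have := LinearMap.injective_iff_surjective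
          (f := (H : E →ₗ[ℝ] E))
        exact this.mp hHinj
    · intro hHbij
      constructor
      · rintro ⟨⟨da, du⟩, hq⟩ ⟨⟨da', du'⟩, hq'⟩ h
        simp only at h
        apply Subtype.ext
        have h1 := (hker _).mp hq
        have h2 := (hker _).mp hq'
        simp only at h1 h2
        have : du = du' := hHbij.injective (by rw [← h1, ← h2, h])
        simp [h, this]
      · intro da
        obtain ⟨du, hdu⟩ := hHbij.surjective
          (ContinuousLinearMap.adjoint (fderiv ℝ ψ u₀) da)
        exact ⟨⟨(da, du), (hker _).mpr hdu.symm⟩, rfl⟩
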